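/- Let X be the one-point compactification of a countably infinite discrete set 𝓕 with limit point G. The category of sheaves of ℚ-modules on X has injective dimension at most 1: every sheaf 𝓖 of ℚ-vector spaces on X embeds into an injective sheaf (the product of skyscraper sheaves on its stalks) with injective quotient, i.e. admits an injective resolution of length 1. -/

import Mathlib

section Aux14All

open CategoryTheory CategoryTheory.Limits TopologicalSpace TopCat TopCat.Presheaf Opposite

noncomputable section Aux14

universe u

/-- Every `ℚ`-module is injective. -/
lemma aux14_qInj (M : ModuleCat.{u} ℚ) : Injective M := by
  have : Module.Injective ℚ M := by
    apply Module.Baer.injective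
    intro I g
    rcases I.eq_bot_or_top with rfl | rfl
    · refine ⟨0, fun x hx => ?_⟩
      have hx0 : x = 0 := by simpa using hx
      subst hx0
      simp [show (⟨(0:ℚ), hx⟩ : (⊥ : Ideal ℚ)) = 0 from rfl]
    · refine ⟨{ toFun := fun x => g ⟨x, trivial⟩, map_add' := ?_, map_smul' := ?_ }, ?_⟩
      · intro a b; rw [← g.map_add]; rfl
      · intro a b; rw [← g.map_smul]; rfl
      · intro x _; rfl
  exact Module.injective_object_of_injective_module (R := ℚ) (M := M)

lemma aux14_isIso_of_isZero {C : Type*} [Category C] {X Y : C} (hX : IsZero X) (hY : IsZero Y)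
    (f : X ⟶ Y) : IsIso f := by
  rw [hX.eq_of_src f (hX.iso hY).hom]; infer_instance

lemma aux14_isZero_of_isTerminal {C : Type*} [Category C] [HasZeroObject C] {X : C}
    (h : IsTerminal X) : IsZero X :=
  (isZero_zero C).of_iso (h.uniqueUpToIso HasZeroObject.zeroIsTerminal)

lemma aux14_isZero_terminal {C : Type*} [Category C] [HasZeroObject C] [HasTerminal C] :
    IsZero (⊤_ C) :=
  aux14_isZero_of_isTerminal terminalIsTerminal

lemma aux14_isIso_pi_π {ι : Type*} {C : Type*} [Category C] [HasZeroMorphisms C]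
    (F : ι → C) [HasProduct F] (i : ι) (hz : ∀ j, j ≠ i → IsZero (F j)) :
    IsIso (Pi.π F i) := by
  classical
  refine ⟨⟨Pi.lift (fun j => if h : i = j then eqToHom (congrArg F h) else 0), ?_, ?_⟩⟩
  · apply Pi.hom_ext
    intro j
    simp only [Category.assoc, limit.lift_π, Fan.mk_π_app, Category.id_comp]
    by_cases h : i = j
    · subst h; simp
    · exact (hz j (fun hj => h hj.symm)).eq_of_tgt _ _
  · simp

/-- The equivalence between opens of `OnePoint ℕ` and opens of its universe lift. -/
def aux14_opensEquiv : Opens (OnePoint ℕ) ≌ Opens (ULift.{u} (OnePoint ℕ)) :=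
  ((Homeomorph.ulift (X := OnePoint ℕ)).opensCongr.symm).equivalence

lemma aux14_topology_eq :
    Opens.grothendieckTopology (ULift.{u} (OnePoint ℕ)) =
      aux14_opensEquiv.{u}.inverse.inducedTopology
        (Opens.grothendieckTopology (OnePoint ℕ)) := by
  refine GrothendieckTopology.ext (funext fun V => Set.ext fun S => ?_)
  rw [Functor.mem_inducedTopology_iff_of_isCoverDense]
  constructor
  · intro hS x hx
    -- x : OnePoint ℕ, hx : x ∈ aux14_opensEquiv.inverse.obj V
    have hx' : ULift.up x ∈ V := hx
    obtain ⟨W, f, hW, hxW⟩ := hS (ULift.up x) hx'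
    refine ⟨aux14_opensEquiv.inverse.obj W, aux14_opensEquiv.inverse.map f, ?_, ?_⟩
    · exact ⟨W, f, 𝟙 _, hW, (Category.id_comp _).symm⟩
    · exact hxW
  · intro hS x hx
    have hx' : (ULift.down x) ∈ aux14_opensEquiv.inverse.obj V := hx
    obtain ⟨W, f, ⟨U, fU, hf, hSU, hfac⟩, hxW⟩ := hS x.down hx'
    refine ⟨U, fU, hSU, ?_⟩
    have hWU : W ≤ aux14_opensEquiv.inverse.obj U := leOfHom hf
    exact hWU hxW

end Aux14

noncomputable section Aux14B
universe u

/-- The equivalence of sheaf categories between the two universes. -/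
def aux14_sheafEquiv :
    CategoryTheory.Sheaf (Opens.grothendieckTopology (TopCat.of (OnePoint ℕ)))
      (ModuleCat.{u} ℚ) ≌
    CategoryTheory.Sheaf
      (Opens.grothendieckTopology (TopCat.of (ULift.{u} (OnePoint ℕ)))) (ModuleCat.{u} ℚ) := by
  haveI : aux14_opensEquiv.{u}.inverse.IsDenseSubsite
      (Opens.grothendieckTopology (ULift.{u} (OnePoint ℕ)))
      (Opens.grothendieckTopology (OnePoint ℕ)) := by
    rw [aux14_topology_eq]; infer_instance
  exact aux14_opensEquiv.sheafCongr (Opens.grothendieckTopology (OnePoint ℕ))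
    (Opens.grothendieckTopology (ULift.{u} (OnePoint ℕ))) (ModuleCat.{u} ℚ)

/-- Transfer the statement along an equivalence of categories. -/
lemma aux14_transfer {C : Type*} {D : Type*} [Category C] [Category D]
    [HasZeroMorphisms C] [HasZeroMorphisms D] (E : C ≌ D) (G : C)
    (H : ∃ (I₀ I₁ : D) (f : E.functor.obj G ⟶ I₀) (g : I₀ ⟶ I₁),
        Injective I₀ ∧ Injective I₁ ∧ Mono f ∧ Epi g ∧ f ≫ g = 0 ∧
        ∀ (Z : D) (h : Z ⟶ I₀), h ≫ g = 0 → ∃ k : Z ⟶ E.functor.obj G, k ≫ f = h) :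
    ∃ (I₀ I₁ : C) (f : G ⟶ I₀) (g : I₀ ⟶ I₁),
        Injective I₀ ∧ Injective I₁ ∧ Mono f ∧ Epi g ∧ f ≫ g = 0 ∧
        ∀ (Z : C) (h : Z ⟶ I₀), h ≫ g = 0 → ∃ k : Z ⟶ G, k ≫ f = h := by
  obtain ⟨I₀', I₁', f', g', hI₀, hI₁, hf, hg, hfg, hfac⟩ := H
  haveI : E.functor.IsLeftAdjoint := E.toAdjunction.isLeftAdjoint
  haveI : E.functor.IsRightAdjoint := E.symm.toAdjunction.isRightAdjoint
  haveI : E.inverse.IsRightAdjoint := E.toAdjunction.isRightAdjoint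
  haveI : Mono f' := hf
  haveI : Epi g' := hg
  refine ⟨E.inverse.obj I₀', E.inverse.obj I₁',
    E.unit.app G ≫ E.inverse.map f', E.inverse.map g', ?_, ?_, ?_, ?_, ?_, ?_⟩
  · haveI := hI₀; exact Injective.injective_of_adjoint E.toAdjunction I₀'
  · haveI := hI₁; exact Injective.injective_of_adjoint E.toAdjunction I₁'
  · haveI : Mono (E.inverse.map f') := E.inverse.map_mono f'
    haveI : IsIso (E.unit.app G) := inferInstance
    exact mono_comp _ _
  · exact E.inverse.map_epi g'
  · rw [Category.assoc, ← E.inverse.map_comp, hfg, Functor.map_zero, comp_zero]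
  · intro Z h hh
    have h₂ : (E.functor.map h ≫ E.counit.app I₀') ≫ g' = 0 := by
      rw [Category.assoc,
        show E.counit.app I₀' ≫ g' = E.functor.map (E.inverse.map g') ≫ E.counit.app I₁' from by
          simpa using (E.counit.naturality g').symm,
        ← Category.assoc, ← E.functor.map_comp, hh, Functor.map_zero, zero_comp]
    obtain ⟨k', hk'⟩ := hfac _ (E.functor.map h ≫ E.counit.app I₀') h₂
    refine ⟨E.unit.app Z ≫ E.inverse.map k' ≫ E.unitInv.app G, ?_⟩
    rw [Category.assoc, Category.assoc]
    rw [show E.unitInv.app G ≫ E.unit.app G ≫ E.inverse.map f' = E.inverse.map f' by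
      rw [← Category.assoc]; simp]
    rw [← E.inverse.map_comp, hk', E.inverse.map_comp]
    have hnat : E.unit.app Z ≫ E.inverse.map (E.functor.map h)
        = h ≫ E.unit.app (E.inverse.obj I₀') := by
      simpa using (E.unit.naturality h)
    rw [← Category.assoc, hnat, Category.assoc, Equivalence.unit_inverse_comp, Category.comp_id]
end Aux14B

noncomputable section Aux14C
universe u

instance aux14_forget₂_pfc :
    PreservesFilteredColimits (forget₂ (ModuleCat.{u} ℚ) AddCommGrpCat.{u}) where
  preserves_filtered_colimits _ _ _ :=
    { preservesColimit := fun {F} =>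
        preservesColimit_of_preserves_colimit_cocone
          (ModuleCat.FilteredColimits.colimitCoconeIsColimit.{u, 0} F)
          (AddCommGrpCat.FilteredColimits.colimitCoconeIsColimit.{u, 0}
            (F ⋙ forget₂ (ModuleCat.{u} ℚ) AddCommGrpCat.{u})) }

instance aux14_forget_pfc : PreservesFilteredColimits (forget (ModuleCat.{u} ℚ)) :=
  Limits.comp_preservesFilteredColimits (forget₂ (ModuleCat ℚ) AddCommGrpCat) (forget AddCommGrpCat)

abbrev aux14_Y : TopCat.{u} := TopCat.of (ULift.{u} (OnePoint ℕ))

/-- The sections functor over a fixed open set. -/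
def aux14_secF (U : Opens ↑(aux14_Y.{u})) :
    TopCat.Sheaf (ModuleCat.{u} ℚ) aux14_Y.{u} ⥤ ModuleCat.{u} ℚ :=
  (sheafToPresheaf (Opens.grothendieckTopology aux14_Y.{u}) (ModuleCat.{u} ℚ)) ⋙
    (evaluation (Opens ↑aux14_Y.{u})ᵒᵖ (ModuleCat.{u} ℚ)).obj (op U)

instance aux14_secF_preserves (U : Opens ↑(aux14_Y.{u})) :
    PreservesLimitsOfShape (Discrete ↑aux14_Y.{u}) (aux14_secF.{u} U) := by
  haveI h4 : PreservesLimitsOfShape (Discrete ↑aux14_Y.{u})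
      (sheafToPresheaf (Opens.grothendieckTopology aux14_Y.{u}) (ModuleCat.{u} ℚ)) :=
    inferInstance
  haveI h5 : PreservesLimitsOfShape (Discrete ↑aux14_Y.{u})
      ((evaluation (Opens ↑aux14_Y.{u})ᵒᵖ (ModuleCat.{u} ℚ)).obj (op U)) := inferInstance
  unfold aux14_secF
  exact @comp_preservesLimitsOfShape _ _ _ _ _ _ _ _ _ _ h4 h5

instance aux14_abelian : Abelian (TopCat.Sheaf (ModuleCat.{u} ℚ) aux14_Y.{u}) :=
  inferInstance

theorem aux14_main (G : Sheaf (Opens.grothendieckTopology aux14_Y.{u}) (ModuleCat.{u} ℚ)) :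
    ∃ (I₀ I₁ : Sheaf (Opens.grothendieckTopology aux14_Y.{u}) (ModuleCat.{u} ℚ))
      (f : G ⟶ I₀) (g : I₀ ⟶ I₁),
        Injective I₀ ∧ Injective I₁ ∧ Mono f ∧ Epi g ∧ f ≫ g = 0 ∧
        ∀ (Z : Sheaf (Opens.grothendieckTopology aux14_Y.{u}) (ModuleCat.{u} ℚ))
          (h : Z ⟶ I₀), h ≫ g = 0 → ∃ k : Z ⟶ G, k ≫ f = h := by
  classical
  let G' : TopCat.Sheaf (ModuleCat.{u} ℚ) aux14_Y.{u} := G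
  let S : ↑aux14_Y.{u} → TopCat.Sheaf (ModuleCat.{u} ℚ) aux14_Y.{u} :=
    fun y => skyscraperSheaf y (G'.presheaf.stalk y)
  let I₀ : TopCat.Sheaf (ModuleCat.{u} ℚ) aux14_Y.{u} := ∏ᶜ S
  let uapp : ∀ y : ↑aux14_Y.{u}, G' ⟶ S y :=
    fun y => (stalkSkyscraperSheafAdjunction (C := ModuleCat.{u} ℚ) y).unit.app G'
  let f : G' ⟶ I₀ := Pi.lift uapp
  -- units are stalk-isos at their own point
  have hunit : ∀ (F : TopCat.Sheaf (ModuleCat.{u} ℚ) aux14_Y.{u}) (y : ↑aux14_Y.{u}),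
      IsIso ((stalkFunctor (ModuleCat.{u} ℚ) y).map
        ((stalkSkyscraperSheafAdjunction (C := ModuleCat.{u} ℚ) y).unit.app F).hom) := by
    intro F y
    have h := (stalkSkyscraperSheafAdjunction (C := ModuleCat.{u} ℚ)
      (X := aux14_Y.{u}) y).left_triangle_components F
    haveI hc : IsIso ((stalkSkyscraperSheafAdjunction (C := ModuleCat.{u} ℚ)
        (X := aux14_Y.{u}) y).counit.app ((Sheaf.forget (ModuleCat.{u} ℚ) aux14_Y.{u} ⋙
          stalkFunctor _ y).obj F)) := by
      dsimp [stalkSkyscraperSheafAdjunction, StalkSkyscraperPresheafAdjunctionAuxs.counit]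
      exact Iso.isIso_hom _
    exact @IsIso.of_isIso_fac_right _ _ _ _ _ _ _ _ hc (IsIso.id _) h
  have hMonof : Mono f := by
    rw [TopCat.Presheaf.mono_iff_stalk_mono]
    intro x
    have hcomp : f ≫ Pi.π S x = uapp x := by simp [f]
    have heq : (stalkFunctor (ModuleCat.{u} ℚ) x).map f.hom ≫
        (stalkFunctor (ModuleCat.{u} ℚ) x).map (Pi.π S x).hom =
        (stalkFunctor (ModuleCat.{u} ℚ) x).map (uapp x).hom := by
      rw [← Functor.map_comp]
      exact congrArg (fun φ => (stalkFunctor (ModuleCat.{u} ℚ) x).map φ.hom) hcomp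
    haveI : IsIso ((stalkFunctor (ModuleCat.{u} ℚ) x).map (uapp x).hom) := hunit G' x
    haveI : Mono ((stalkFunctor (ModuleCat.{u} ℚ) x).map f.hom ≫
        (stalkFunctor (ModuleCat.{u} ℚ) x).map (Pi.π S x).hom) := by
      rw [heq]; infer_instance
    exact mono_of_mono _ ((stalkFunctor (ModuleCat.{u} ℚ) x).map (Pi.π S x).hom)
  -- singleton opens at the isolated points
  have hopen : ∀ n : ℕ, IsOpen ({ULift.up ((n : ℕ) : OnePoint ℕ)} : Set ↑aux14_Y.{u}) := by
    intro n
    have h1 : IsOpen ({((n : ℕ) : OnePoint ℕ)} : Set (OnePoint ℕ)) := by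
      have := OnePoint.isOpen_image_coe.2 (isOpen_discrete ({n} : Set ℕ))
      simpa using this
    have h2 : ({ULift.up ((n : ℕ) : OnePoint ℕ)} : Set ↑aux14_Y.{u}) =
        (Homeomorph.ulift (X := OnePoint ℕ)) ⁻¹' {((n : ℕ) : OnePoint ℕ)} := by
      ext ⟨z⟩
      simp only [Set.mem_singleton_iff, Set.mem_preimage]
      exact ⟨fun h => congrArg ULift.down h, fun h => congrArg ULift.up h⟩
    rw [h2]
    exact (Homeomorph.ulift (X := OnePoint ℕ)).isOpen_preimage.2 h1
  let ix : ℕ → ↑aux14_Y.{u} := fun n => ULift.up ((n : ℕ) : OnePoint ℕ)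
  let Ux : ℕ → Opens ↑aux14_Y.{u} := fun n => ⟨{ix n}, hopen n⟩
  have hmem : ∀ n : ℕ, ix n ∈ Ux n := fun n => rfl
  -- the germ map from the singleton open is an isomorphism
  have hgerm : ∀ (F : TopCat.Presheaf (ModuleCat.{u} ℚ) aux14_Y.{u}) (n : ℕ),
      IsIso (F.germ (Ux n) (ix n) (hmem n)) := by
    intro F n
    have hinit : IsInitial (⟨Ux n, hmem n⟩ : OpenNhds (ix n)) := by
      refine IsInitial.ofUniqueHom (fun V => homOfLE ?_) (fun V m => Subsingleton.elim _ _)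
      intro z hz
      exact (Set.mem_singleton_iff.mp hz) ▸ V.2
    exact isIso_ι_of_isTerminal (terminalOpOfInitial hinit) ((OpenNhds.inclusion (ix n)).op ⋙ F)
  have hπ : ∀ n : ℕ, IsIso ((Pi.π S (ix n)).hom.app (op (Ux n))) := by
    intro n
    haveI h1 : IsIso (piComparison (aux14_secF.{u} (Ux n)) S) := by
      rw [← PreservesProduct.iso_hom]; infer_instance
    haveI h2 : IsIso (Pi.π (fun y => (aux14_secF.{u} (Ux n)).obj (S y)) (ix n)) := by
      apply aux14_isIso_pi_π
      intro j hj
      have hje : (S j).val.obj (op (Ux n)) = (⊤_ ModuleCat.{u} ℚ) := by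
        show (if j ∈ Ux n then G'.presheaf.stalk j else (⊤_ ModuleCat.{u} ℚ)) = _
        rw [if_neg]
        intro hjj
        exact hj (Set.mem_singleton_iff.mp hjj)
      exact aux14_isZero_terminal.of_iso (eqToIso hje)
    have h3 : (aux14_secF.{u} (Ux n)).map (Pi.π S (ix n)) =
        piComparison (aux14_secF.{u} (Ux n)) S ≫
          Pi.π (fun y => (aux14_secF.{u} (Ux n)).obj (S y)) (ix n) := by
      rw [piComparison_comp_π]
    show IsIso ((aux14_secF.{u} (Ux n)).map (Pi.π S (ix n)))
    rw [h3]
    infer_instance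
  have huapp : ∀ n : ℕ, IsIso ((uapp (ix n)).hom.app (op (Ux n))) := by
    intro n
    show IsIso ((StalkSkyscraperPresheafAdjunctionAuxs.toSkyscraperPresheaf (ix n)
      (𝟙 (G'.presheaf.stalk (ix n)))).app (op (Ux n)))
    rw [StalkSkyscraperPresheafAdjunctionAuxs.toSkyscraperPresheaf_app]
    erw [dif_pos (show ix n ∈ unop (op (Ux n)) from hmem n)]
    haveI := hgerm G'.presheaf n
    refine IsIso.comp_isIso' (hgerm G'.presheaf n)
      (IsIso.comp_isIso' (IsIso.id _) (Iso.isIso_hom (eqToIso ?_)))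
    exact (if_pos (show ix n ∈ unop (op (Ux n)) from hmem n)).symm
  have hfapp : ∀ n : ℕ, IsIso (f.hom.app (op (Ux n))) := by
    intro n
    have hcomp : f ≫ Pi.π S (ix n) = uapp (ix n) := by simp [f]
    have hfac : f.hom.app (op (Ux n)) ≫ (Pi.π S (ix n)).hom.app (op (Ux n)) =
        (uapp (ix n)).hom.app (op (Ux n)) := by
      rw [← NatTrans.comp_app]
      exact congrArg (fun φ => φ.hom.app (op (Ux n))) hcomp
    haveI := hπ n; haveI := huapp n
    exact IsIso.of_isIso_fac_right hfac
  have hstalkf : ∀ n : ℕ, IsIso ((stalkFunctor (ModuleCat.{u} ℚ) (ix n)).map f.hom) := by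
    intro n
    have hng := stalkFunctor_map_germ (C := ModuleCat.{u} ℚ) (Ux n) (ix n) (hmem n) f.hom
    haveI := hgerm G'.presheaf n
    haveI := hgerm I₀.presheaf n
    haveI := hfapp n
    have h4 : IsIso (G'.presheaf.germ (Ux n) (ix n) (hmem n) ≫
        (stalkFunctor (ModuleCat.{u} ℚ) (ix n)).map f.hom) := by
      rw [hng]; exact IsIso.comp_isIso' (hfapp n) (hgerm I₀.presheaf n)
    exact IsIso.of_isIso_comp_left (G'.presheaf.germ (Ux n) (ix n) (hmem n)) _
  -- the cokernel
  let Q : TopCat.Sheaf (ModuleCat.{u} ℚ) aux14_Y.{u} := cokernel f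
  let g : I₀ ⟶ Q := cokernel.π f
  -- stalks of Q vanish at the isolated points
  have hQzero : ∀ n : ℕ,
      IsZero ((Sheaf.forget (ModuleCat.{u} ℚ) aux14_Y.{u} ⋙
        stalkFunctor (ModuleCat.{u} ℚ) (ix n)).obj Q) := by
    intro n
    set L := Sheaf.forget (ModuleCat.{u} ℚ) aux14_Y.{u} ⋙
      stalkFunctor (ModuleCat.{u} ℚ) (ix n) with hL
    haveI : L.IsLeftAdjoint :=
      (stalkSkyscraperSheafAdjunction (C := ModuleCat.{u} ℚ) (ix n)).isLeftAdjoint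
    haveI : PreservesColimitsOfSize.{0, 0} L :=
      (stalkSkyscraperSheafAdjunction (C := ModuleCat.{u} ℚ)
        (ix n)).leftAdjoint_preservesColimits
    haveI : IsIso (L.map f) := hstalkf n
    haveI : Epi (L.map f) := inferInstance
    exact (isZero_zero _).of_iso
      ((PreservesCokernel.iso L f).trans (cokernel.ofEpi (L.map f)))
  -- the point at infinity
  let winf : ↑aux14_Y.{u} := ULift.up (OnePoint.infty)
  have hnspec : ∀ n : ℕ, ¬ (winf ⤳ ix n) := by
    intro n h
    have hmemw : winf ∈ ({ix n} : Set ↑aux14_Y.{u}) := h.mem_open (hopen n) (hmem n)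
    have : winf = ix n := Set.mem_singleton_iff.mp hmemw
    have hdown : (OnePoint.infty : OnePoint ℕ) = ((n : ℕ) : OnePoint ℕ) :=
      congrArg ULift.down this
    exact (OnePoint.infty_ne_coe n) hdown
  have hskyzero : ∀ n : ℕ,
      IsZero ((skyscraperPresheaf winf (Q.presheaf.stalk winf)
        (C := ModuleCat.{u} ℚ)).stalk (ix n)) := fun n =>
    aux14_isZero_of_isTerminal
      (skyscraperPresheafStalkOfNotSpecializesIsTerminal winf _ (hnspec n))
  -- the unit of Q at infinity is an isomorphism
  let w : Q ⟶ skyscraperSheaf winf (Q.presheaf.stalk winf) :=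
    (stalkSkyscraperSheafAdjunction (C := ModuleCat.{u} ℚ) winf).unit.app Q
  have hwiso : ∀ y : ↑aux14_Y.{u}, IsIso ((stalkFunctor (ModuleCat.{u} ℚ) y).map w.hom) := by
    intro y
    obtain ⟨yd⟩ := y
    cases yd with
    | infty => exact hunit Q winf
    | coe m => exact aux14_isIso_of_isZero (hQzero m) (hskyzero m) _
  haveI : ∀ y : ↑aux14_Y.{u}, IsIso ((stalkFunctor (ModuleCat.{u} ℚ) y).map w.hom) := hwiso
  haveI hwIso : IsIso w := TopCat.Presheaf.isIso_of_stalkFunctor_map_iso w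
  -- injectivity
  have hSInj : ∀ (y : ↑aux14_Y.{u}) (A : ModuleCat.{u} ℚ), Injective (skyscraperSheaf y A) := by
    intro y A
    haveI := aux14_qInj A
    exact Injective.injective_of_adjoint
      (stalkSkyscraperSheafAdjunction (C := ModuleCat.{u} ℚ) y) A
  haveI : ∀ y : ↑aux14_Y.{u}, Injective (S y) := fun y => hSInj y _
  have hI₀inj : Injective I₀ := inferInstance
  have hQinj : Injective Q := Injective.of_iso (asIso w).symm (hSInj winf _)
  haveI : Mono f := hMonof
  refine ⟨I₀, Q, f, g, hI₀inj, hQinj, hMonof, coequalizer.π_epi, cokernel.condition f, ?_⟩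
  intro Z h hh
  exact ⟨Abelian.monoLift f h hh, Abelian.monoLift_comp f h hh⟩
end Aux14C

end Aux14All

open CategoryTheory TopologicalSpace

/-- The category of sheaves of `ℚ`-modules on the one-point compactification
`X` of a countably infinite discrete set has injective dimension at most 1:
every sheaf `G` fits in an exact sequence `0 → G → I₀ → I₁ → 0` with `I₀`,
`I₁` injective (exactness at `I₀` is expressed by: `f` is mono, `f ≫ g = 0`,
and every map killing `g` factors through `f`). -/
theorem stmt14
    (G : Sheaf (Opens.grothendieckTopology (TopCat.of (OnePoint ℕ))) (ModuleCat ℚ)) :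
    ∃ (I₀ I₁ : Sheaf (Opens.grothendieckTopology (TopCat.of (OnePoint ℕ))) (ModuleCat ℚ))
      (f : G ⟶ I₀) (g : I₀ ⟶ I₁),
        Injective I₀ ∧ Injective I₁ ∧ Mono f ∧ Epi g ∧ f ≫ g = 0 ∧
        ∀ (Z : Sheaf (Opens.grothendieckTopology (TopCat.of (OnePoint ℕ))) (ModuleCat ℚ))
          (h : Z ⟶ I₀), h ≫ g = 0 → ∃ k : Z ⟶ G, k ≫ f = h := by
  exact aux14_transfer aux14_sheafEquiv G (aux14_main (aux14_sheafEquiv.functor.obj G))
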